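/- Let (p̲_i, p̄_i)_{i=1}^n be a good coherent probability interval on E = {a_1,…,a_n} with n ≥ 4. Then for every subset V ⊆ E with 2 ≤ |V| ≤ n−2, one has Σ_{i : a_i ∈ V} p̲_i ≥ 1 − Σ_{i : a_i ∉ V} p̄_i. -/
import Mathlib


open Finset

/-- A Dempster–Shafer mass function on the finite type `α`:
nonnegative, at most one, vanishing on `∅`, and summing to one. -/
def IsMass {α : Type*} [Fintype α] [DecidableEq α] (m : Finset α → ℝ) : Prop :=
  m ∅ = 0 ∧ (∀ V : Finset α, 0 ≤ m V ∧ m V ≤ 1) ∧ (∑ V : Finset α, m V) = 1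

/-- The belief function associated to a mass function: `Bel m W = ∑_{V ⊆ W} m V`. -/
def Bel {α : Type*} [Fintype α] [DecidableEq α] (m : Finset α → ℝ) (W : Finset α) : ℝ :=
  ∑ V ∈ Finset.univ.filter (fun V : Finset α => V ⊆ W), m V

/-- The plausibility function associated to a mass function:
`Pl m W = ∑_{V ∩ W ≠ ∅} m V`. -/
def Pl {α : Type*} [Fintype α] [DecidableEq α] (m : Finset α → ℝ) (W : Finset α) : ℝ :=
  ∑ V ∈ Finset.univ.filter (fun V : Finset α => (V ∩ W).Nonempty), m V

/-- A coherent probability interval `(lo i, hi i)_{i}` on `Fin n`: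
componentwise bounds `0 ≤ lo ≤ hi ≤ 1`, together with [Coh1], [Coh2], [Coh3]. -/
def IsCoherent {n : ℕ} (lo hi : Fin n → ℝ) : Prop :=
  (∀ i, 0 ≤ lo i ∧ lo i ≤ hi i ∧ hi i ≤ 1) ∧
  (∑ i, lo i) ≤ 1 ∧ 1 ≤ (∑ i, hi i) ∧
  (∀ i, 1 - ∑ h ∈ Finset.univ.erase i, hi h ≤ lo i) ∧
  (∀ i, hi i ≤ 1 - ∑ h ∈ Finset.univ.erase i, lo h)

/-- `Δ = S̄ + (n-2)S̲ - (n-1)` for a probability interval. -/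
def intervalDelta {n : ℕ} (lo hi : Fin n → ℝ) : ℝ :=
  (∑ i, hi i) + ((n : ℝ) - 2) * (∑ i, lo i) - ((n : ℝ) - 1)

/-- A *good* coherent probability interval: coherent and `Δ ≥ 0`. -/
def IsGood {n : ℕ} (lo hi : Fin n → ℝ) : Prop :=
  IsCoherent lo hi ∧ 0 ≤ intervalDelta lo hi

/-- The standard good mass (SGM) associated to a (good coherent) probability interval:
mass `lo i` on each singleton `{a_i}`, mass `1 - hi i - ∑_{h ≠ i} lo h` on each
complement `univ ∖ {a_i}`, mass `Δ` on `univ`, and `0` on every other set. -/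
def SGM {n : ℕ} (lo hi : Fin n → ℝ) (V : Finset (Fin n)) : ℝ :=
  (∑ i ∈ Finset.univ.filter (fun i : Fin n => V = {i}), lo i)
  + (∑ i ∈ Finset.univ.filter (fun i : Fin n => V = Finset.univ \ {i}),
      (1 - hi i - ∑ h ∈ Finset.univ.erase i, lo h))
  + (if V = Finset.univ then intervalDelta lo hi else 0)

/-- For a good coherent probability interval `(lo, hi)` on
`E = Fin n` with `n ≥ 4`, every subset `V ⊆ E` with `2 ≤ |V| ≤ n - 2` satisfies
`∑_{i ∈ V} lo i ≥ 1 - ∑_{i ∉ V} hi i`. -/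
theorem good_interval_middle_sets (n : ℕ) (hn : 4 ≤ n) (lo hi : Fin n → ℝ)
    (h : IsGood lo hi) (V : Finset (Fin n))
    (hV1 : 2 ≤ V.card) (hV2 : V.card ≤ n - 2) :
    1 - ∑ i ∈ Vᶜ, hi i ≤ ∑ i ∈ V, lo i := by
  obtain ⟨⟨hb, hS1, hS2, hcoh2, hcoh3⟩, hΔ⟩ := h
  set S : ℝ := ∑ i, lo i with hS
  have ht : 0 ≤ 1 - S := by linarith
  have hd : ∀ i, hi i - lo i ≤ 1 - S := by
    intro i
    have h1 : ∑ h ∈ Finset.univ.erase i, lo h = S - lo i := by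
      have := Finset.add_sum_erase Finset.univ lo (Finset.mem_univ i)
      simp only [hS]; linarith
    have := hcoh3 i
    rw [h1] at this
    linarith
  have hsum : ((n : ℝ) - 1) * (1 - S) ≤ ∑ i, (hi i - lo i) := by
    have hΔ' : 0 ≤ (∑ i, hi i) + ((n : ℝ) - 2) * S - ((n : ℝ) - 1) := hΔ
    have : ∑ i, (hi i - lo i) = (∑ i, hi i) - S := by
      rw [Finset.sum_sub_distrib]
    rw [this]; ring_nf; nlinarith
  have hcard : (V.card : ℝ) ≤ (n : ℝ) - 2 := by
    have h2 : 2 ≤ n := by omega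
    have := (Nat.cast_le (α := ℝ)).mpr hV2
    rwa [Nat.cast_sub h2] at this
  have hVsum : ∑ i ∈ V, (hi i - lo i) ≤ ((n : ℝ) - 2) * (1 - S) := by
    calc ∑ i ∈ V, (hi i - lo i) ≤ ∑ i ∈ V, (1 - S) :=
          Finset.sum_le_sum (fun i _ => hd i)
      _ = (V.card : ℝ) * (1 - S) := by rw [Finset.sum_const, nsmul_eq_mul]
      _ ≤ ((n : ℝ) - 2) * (1 - S) := mul_le_mul_of_nonneg_right hcard ht
  have hsplit : ∑ i ∈ V, (hi i - lo i) + ∑ i ∈ Vᶜ, (hi i - lo i)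
      = ∑ i, (hi i - lo i) := Finset.sum_add_sum_compl V _
  have hVc : 1 - S ≤ ∑ i ∈ Vᶜ, (hi i - lo i) := by nlinarith
  have hsplit2 : ∑ i ∈ V, lo i + ∑ i ∈ Vᶜ, lo i = S := Finset.sum_add_sum_compl V lo
  have h3 : ∑ i ∈ Vᶜ, (hi i - lo i) = ∑ i ∈ Vᶜ, hi i - ∑ i ∈ Vᶜ, lo i := by
    rw [Finset.sum_sub_distrib]
  linarith
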